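/- Any rectifiable curve joining the sphere of radius a to the sphere of radius b (0 < a < b) in a normed space has the property that ∫_γ ds/‖x‖ ≥ log(b/a). -/

import Mathlib

open Set MeasureTheory Filter Topology intervalIntegral

/-- Variant of `sub_le_integral_of_hasDeriv_right_of_le_Ico` where the derivative hypothesis
is replaced by a bound on right slopes. -/
theorem my_sub_le_integral_of_slope {g g' φ : ℝ → ℝ} {a b : ℝ} (hab : a ≤ b)
    (hcont : ContinuousOn g (Icc a b))
    (hslope : ∀ x ∈ Ico a b, ∀ y, g' x < y → ∀ᶠ u in 𝓝[>] x, slope g x u < y)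
    (φint : IntegrableOn φ (Icc a b)) (hφg : ∀ x ∈ Ico a b, g' x ≤ φ x) :
    g b - g a ≤ ∫ y in a..b, φ y := by
  refine le_of_forall_pos_le_add fun ε εpos => ?_
  rcases exists_lt_lowerSemicontinuous_integral_lt φ φint εpos with
    ⟨G', f_lt_G', G'cont, G'int, G'lt_top, hG'⟩
  set s := {t | g t - g a ≤ ∫ u in a..t, (G' u).toReal} ∩ Icc a b
  have s_closed : IsClosed s := by
    have : ContinuousOn (fun t => (g t - g a, ∫ u in a..t, (G' u).toReal)) (Icc a b) := by
      rw [← uIcc_of_le hab] at G'int hcont ⊢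
      exact (hcont.sub continuousOn_const).prodMk (continuousOn_primitive_interval G'int)
    simp only [s, inter_comm]
    exact this.preimage_isClosed_of_isClosed isClosed_Icc OrderClosedTopology.isClosed_le'
  have main : Icc a b ⊆ {t | g t - g a ≤ ∫ u in a..t, (G' u).toReal} := by
    refine s_closed.Icc_subset_of_forall_exists_gt
      (by simp only [integral_same, mem_setOf_eq, sub_self, le_rfl]) fun t ht v t_lt_v => ?_
    obtain ⟨y, g'_lt_y', y_lt_G'⟩ : ∃ y : ℝ, (g' t : EReal) < y ∧ (y : EReal) < G' t :=
      EReal.lt_iff_exists_real_btwn.1 ((EReal.coe_le_coe_iff.2 (hφg t ht.2)).trans_lt (f_lt_G' t))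
    have I1 : ∀ᶠ u in 𝓝[>] t, (u - t) * y ≤ ∫ w in t..u, (G' w).toReal := by
      have B : ∀ᶠ u in 𝓝 t, (y : EReal) < G' u := G'cont.lowerSemicontinuousAt _ _ y_lt_G'
      rcases mem_nhds_iff_exists_Ioo_subset.1 B with ⟨m, M, ⟨hm, hM⟩, H⟩
      have : Ioo t (min M b) ∈ 𝓝[>] t := Ioo_mem_nhdsGT (lt_min hM ht.right.right)
      filter_upwards [this] with u hu
      have I : Icc t u ⊆ Icc a b := Icc_subset_Icc ht.2.1 (hu.2.le.trans (min_le_right _ _))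
      calc
        (u - t) * y = ∫ _ in Icc t u, y := by
          simp only [hu.left.le, MeasureTheory.integral_const, smul_eq_mul, measureReal_restrict_apply_univ, Real.volume_real_Icc_of_le hu.left.le, sub_nonneg,
            MeasurableSet.univ, Real.volume_Icc, Measure.restrict_apply, univ_inter,
            ENNReal.toReal_ofReal]
        _ ≤ ∫ w in t..u, (G' w).toReal := by
          rw [intervalIntegral.integral_of_le hu.1.le, ← integral_Icc_eq_integral_Ioc]
          apply setIntegral_mono_ae_restrict
          · exact integrableOn_const (by rw [Real.volume_Icc]; exact ENNReal.ofReal_ne_top)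
          · exact IntegrableOn.mono_set G'int I
          · have C1 : ∀ᵐ x : ℝ ∂volume.restrict (Icc t u), G' x < ⊤ :=
              ae_mono (Measure.restrict_mono I le_rfl) G'lt_top
            have C2 : ∀ᵐ x : ℝ ∂volume.restrict (Icc t u), x ∈ Icc t u :=
              ae_restrict_mem measurableSet_Icc
            filter_upwards [C1, C2] with x G'x hx
            apply EReal.coe_le_coe_iff.1
            have : x ∈ Ioo m M := by
              simp only [hm.trans_le hx.left,
                (hx.right.trans_lt hu.right).trans_le (min_le_left M b), mem_Ioo, and_self_iff]
            refine (H this).out.le.trans_eq ?_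
            exact (EReal.coe_toReal G'x.ne (f_lt_G' x).ne_bot).symm
    have I2 : ∀ᶠ u in 𝓝[>] t, g u - g t ≤ (u - t) * y := by
      have g'_lt_y : g' t < y := EReal.coe_lt_coe_iff.1 g'_lt_y'
      filter_upwards [hslope t ht.2 y g'_lt_y, self_mem_nhdsWithin] with u hu t_lt_u
      have := mul_le_mul_of_nonneg_left hu.le (sub_pos.2 t_lt_u.out).le
      rwa [← smul_eq_mul, sub_smul_slope] at this
    have I3 : ∀ᶠ u in 𝓝[>] t, g u - g t ≤ ∫ w in t..u, (G' w).toReal := by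
      filter_upwards [I1, I2] with u hu1 hu2 using hu2.trans hu1
    have I4 : ∀ᶠ u in 𝓝[>] t, u ∈ Ioc t (min v b) := by
      refine mem_nhdsGT_iff_exists_Ioc_subset.2 ⟨min v b, ?_, Subset.rfl⟩
      simp only [lt_min_iff, mem_Ioi]
      exact ⟨t_lt_v, ht.2.2⟩
    rcases (I3.and I4).exists with ⟨x, hx, h'x⟩
    refine ⟨x, ?_, Ioc_subset_Ioc le_rfl (min_le_left _ _) h'x⟩
    calc
      g x - g a = g t - g a + (g x - g t) := by abel
      _ ≤ (∫ w in a..t, (G' w).toReal) + ∫ w in t..x, (G' w).toReal := add_le_add ht.1 hx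
      _ = ∫ w in a..x, (G' w).toReal := by
        apply integral_add_adjacent_intervals
        · rw [intervalIntegrable_iff_integrableOn_Ioc_of_le ht.2.1]
          exact IntegrableOn.mono_set G'int
            (Ioc_subset_Icc_self.trans (Icc_subset_Icc le_rfl ht.2.2.le))
        · rw [intervalIntegrable_iff_integrableOn_Ioc_of_le h'x.1.le]
          apply IntegrableOn.mono_set G'int
          exact Ioc_subset_Icc_self.trans (Icc_subset_Icc ht.2.1 (h'x.2.trans (min_le_right _ _)))
  calc
    g b - g a ≤ ∫ y in a..b, (G' y).toReal := main (right_mem_Icc.2 hab)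
    _ ≤ (∫ y in a..b, φ y) + ε := by
      convert (show (∫ x in Icc a b, (G' x).toReal) ≤ (∫ x in Icc a b, φ x) + ε from hG'.le) using 2 <;>
        · rw [intervalIntegral.integral_of_le hab]
          simp only [integral_Icc_eq_integral_Ioc', Real.volume_singleton]

theorem curve_joining_spheres_log_estimate
    {X : Type*} [NormedAddCommGroup X] [NormedSpace ℝ X]
    (a b : ℝ) (ha : 0 < a) (hab : a < b)
    (γ : ℝ → X) (hγ : Differentiable ℝ γ)
    (h0 : ‖γ 0‖ = a) (h1 : ‖γ 1‖ = b)
    (hbetween : ∀ t ∈ Icc (0:ℝ) 1, a ≤ ‖γ t‖ ∧ ‖γ t‖ ≤ b)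
    (hint : IntervalIntegrable (fun t => ‖deriv γ t‖ / ‖γ t‖) MeasureTheory.volume 0 1) :
    Real.log (b / a) ≤ ∫ t in (0:ℝ)..1, ‖deriv γ t‖ / ‖γ t‖ := by
  set g : ℝ → ℝ := fun t => Real.log ‖γ t‖ with hg
  set φ : ℝ → ℝ := fun t => ‖deriv γ t‖ / ‖γ t‖ with hφ
  have hcont : ContinuousOn g (Icc 0 1) := by
    apply ContinuousOn.log (hγ.continuous.norm.continuousOn)
    intro t ht
    exact ne_of_gt (lt_of_lt_of_le ha (hbetween t ht).1)
  have hslope : ∀ x ∈ Ico (0:ℝ) 1, ∀ y, φ x < y → ∀ᶠ u in 𝓝[>] x, slope g x u < y := by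
    intro t ht y hy
    have htpos : 0 < ‖γ t‖ := lt_of_lt_of_le ha (hbetween t ⟨ht.1, ht.2.le⟩).1
    have hlt : ‖deriv γ t‖ < y * ‖γ t‖ := (div_lt_iff₀ htpos).1 hy
    have h1' : Tendsto (slope γ t) (𝓝[≠] t) (𝓝 (deriv γ t)) :=
      hasDerivAt_iff_tendsto_slope.1 (hγ t).hasDerivAt
    have h2 : ∀ᶠ u in 𝓝[≠] t, ‖slope γ t u‖ < y * ‖γ t‖ := h1'.norm.eventually_lt_const hlt
    have h2' : ∀ᶠ u in 𝓝[>] t, ‖slope γ t u‖ < y * ‖γ t‖ :=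
      h2.filter_mono (nhdsWithin_mono _ (fun u hu => ne_of_gt hu))
    have h3 : ∀ᶠ u in 𝓝 t, 0 < ‖γ u‖ :=
      (hγ.continuous.norm.tendsto t).eventually_const_lt htpos
    filter_upwards [h2', h3.filter_mono nhdsWithin_le_nhds, self_mem_nhdsWithin]
      with u hu hupos htu
    have htu' : (0:ℝ) < u - t := sub_pos.2 htu
    have key : g u - g t ≤ ‖γ u - γ t‖ / ‖γ t‖ := by
      have : g u - g t = Real.log (‖γ u‖ / ‖γ t‖) := by
        rw [Real.log_div (ne_of_gt hupos) (ne_of_gt htpos)]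
      rw [this]
      calc Real.log (‖γ u‖ / ‖γ t‖) ≤ ‖γ u‖ / ‖γ t‖ - 1 :=
            Real.log_le_sub_one_of_pos (div_pos hupos htpos)
        _ = (‖γ u‖ - ‖γ t‖) / ‖γ t‖ := by field_simp
        _ ≤ ‖γ u - γ t‖ / ‖γ t‖ := by gcongr; exact norm_sub_norm_le _ _
    have hnorm : ‖slope γ t u‖ = ‖γ u - γ t‖ / (u - t) := by
      rw [slope_def_module, norm_smul, norm_inv, Real.norm_eq_abs, abs_of_pos htu']
      ring
    calc slope g t u = (g u - g t) / (u - t) := slope_def_field g t u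
      _ ≤ (‖γ u - γ t‖ / ‖γ t‖) / (u - t) := by gcongr
      _ = (‖γ u - γ t‖ / (u - t)) / ‖γ t‖ := by ring
      _ = ‖slope γ t u‖ / ‖γ t‖ := by rw [hnorm]
      _ < (y * ‖γ t‖) / ‖γ t‖ := by gcongr
      _ = y := by field_simp
  have φint : IntegrableOn φ (Icc 0 1) :=
    (intervalIntegrable_iff_integrableOn_Icc_of_le (by norm_num)).1 hint
  have main := my_sub_le_integral_of_slope (by norm_num : (0:ℝ) ≤ 1) hcont hslope φint
    (fun x _ => le_rfl)
  have : g 1 - g 0 = Real.log (b / a) := by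
    simp only [hg, h0, h1]
    rw [Real.log_div (by linarith : b ≠ 0) ha.ne']
  linarith [main]
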